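/- Let k ≥ 2 and let F be a k-Mahler function that extends to a meromorphic function on the whole complex plane. Then F has only finitely many singularities (poles). -/

import Mathlib

open Filter Metric Polynomial Topology

namespace KMahlerAux

/-- `f` is bounded on a punctured neighbourhood of `x`. -/
def Bdd (f : ℂ → ℂ) (x : ℂ) : Prop := ∃ B : ℝ, ∀ᶠ z in 𝓝[≠] x, ‖f z‖ ≤ B

lemma bdd_of_analyticAt {f : ℂ → ℂ} {x : ℂ} (h : AnalyticAt ℂ f x) : Bdd f x := by
  refine ⟨‖f x‖ + 1, ?_⟩
  have : Tendsto (fun z => ‖f z‖) (𝓝 x) (𝓝 ‖f x‖) := h.continuousAt.norm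
  exact (this.eventually_le_const (by linarith : ‖f x‖ < ‖f x‖ + 1)).filter_mono
    nhdsWithin_le_nhds

lemma not_bdd_of_tendsto {f : ℂ → ℂ} {x : ℂ}
    (h : Tendsto (fun z => ‖f z‖) (𝓝[≠] x) atTop) : ¬ Bdd f x := by
  rintro ⟨B, hB⟩
  have h2 : ∀ᶠ z in 𝓝[≠] x, B + 1 ≤ ‖f z‖ := h.eventually_ge_atTop (B + 1)
  obtain ⟨z, hz1, hz2⟩ := (hB.and h2).exists
  linarith

/-- A set which is locally avoided (in punctured neighbourhoods) meets every compact set in a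
finite set. -/
lemma finite_inter_compact {A K : Set ℂ} (h : ∀ x : ℂ, ∀ᶠ z in 𝓝[≠] x, z ∉ A)
    (hK : IsCompact K) : (A ∩ K).Finite := by
  by_contra hinf
  have hinf' : (A ∩ K).Infinite := hinf
  let u := hinf'.natEmbedding
  have hu : ∀ n, (u n : ℂ) ∈ A ∩ K := fun n => (u n).2
  obtain ⟨x, hxK, φ, hφ, hconv⟩ := hK.tendsto_subseq (fun n => (hu n).2)
  have hx := h x
  rw [eventually_nhdsWithin_iff] at hx
  have h1 : ∀ᶠ n in atTop, ((u (φ n) : ℂ)) ∈ {z : ℂ | z ∈ ({x}ᶜ : Set ℂ) → z ∉ A} :=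
    hconv.eventually hx
  have h2 : ∀ᶠ n in atTop, (u (φ n) : ℂ) = x := by
    filter_upwards [h1] with n hn
    by_contra hne
    exact hn hne (hu (φ n)).1
  obtain ⟨N, hN⟩ := eventually_atTop.mp h2
  have h3 : u (φ N) = u (φ (N + 1)) :=
    Subtype.ext ((hN N le_rfl).trans (hN (N + 1) (by omega)).symm)
  have h4 : φ N = φ (N + 1) := u.injective h3
  exact hφ.injective.ne (by omega : N ≠ N + 1) h4

lemma eventually_mem_imp_eq {F : Set ℂ} (hF : F.Finite) (x : ℂ) :
    ∀ᶠ z in 𝓝[≠] x, z ∈ F → z = x := by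
  have hcl : IsClosed (F \ {x} : Set ℂ) := (hF.subset Set.diff_subset).isClosed
  have hx : x ∈ (F \ {x} : Set ℂ)ᶜ := by simp
  have h1 : ∀ᶠ z in 𝓝 x, z ∈ (F \ {x} : Set ℂ)ᶜ :=
    hcl.isOpen_compl.eventually_mem hx
  filter_upwards [h1.filter_mono nhdsWithin_le_nhds] with z hz hzF
  by_contra hne
  exact hz ⟨hzF, hne⟩

lemma eventually_pow_ne {m : ℕ} (hm : 0 < m) (x : ℂ) :
    ∀ᶠ z in 𝓝[≠] x, z ^ m ≠ x ^ m := by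
  have hfin : {z : ℂ | z ^ m = x ^ m}.Finite := by
    have hp : ((X : ℂ[X]) ^ m - C (x ^ m)) ≠ 0 := X_pow_sub_C_ne_zero hm _
    have := finite_setOf_isRoot hp
    apply this.subset
    intro z hz
    simp only [Set.mem_setOf_eq, IsRoot.def, eval_sub, eval_pow, eval_X, eval_C]
    rw [Set.mem_setOf_eq] at hz
    rw [hz, sub_self]
  have h1 := eventually_mem_imp_eq hfin x
  have h2 : ∀ᶠ z in 𝓝[≠] x, z ≠ x :=
    eventually_mem_nhdsWithin.mono fun z hz => hz
  filter_upwards [h1, h2] with z hz hzx heq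
  exact hzx (hz heq)

lemma tendsto_pow_punctured {m : ℕ} (hm : 0 < m) (x : ℂ) :
    Tendsto (fun z : ℂ => z ^ m) (𝓝[≠] x) (𝓝[≠] (x ^ m)) := by
  rw [tendsto_nhdsWithin_iff]
  constructor
  · exact ((continuous_pow m).tendsto x).mono_left nhdsWithin_le_nhds
  · exact (eventually_pow_ne hm x).mono fun z hz => hz

/-- Transfer of punctured boundedness through a power map, using the open mapping theorem. -/
lemma bdd_of_comp_pow {f : ℂ → ℂ} {m : ℕ} (hm : 0 < m) {x : ℂ} {B : ℝ}
    (h : ∀ᶠ z in 𝓝[≠] x, ‖f (z ^ m)‖ ≤ B) : ∃ B' : ℝ, ∀ᶠ u in 𝓝[≠] (x ^ m), ‖f u‖ ≤ B' := by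
  have hφ : AnalyticAt ℂ (fun z : ℂ => z ^ m) x := analyticAt_id.pow m
  rcases hφ.eventually_constant_or_nhds_le_map_nhds with hconst | hmap
  · exfalso
    obtain ⟨z, hz1, hz2⟩ :=
      ((eventually_pow_ne hm x).and (hconst.filter_mono nhdsWithin_le_nhds)).exists
    exact hz1 hz2
  · refine ⟨B, ?_⟩
    rw [eventually_nhdsWithin_iff] at h
    have himg : (fun z : ℂ => z ^ m) ''
        {z : ℂ | z ∈ ({x}ᶜ : Set ℂ) → ‖f (z ^ m)‖ ≤ B} ∈ 𝓝 (x ^ m) :=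
      hmap (image_mem_map h)
    rw [eventually_nhdsWithin_iff]
    filter_upwards [himg] with u hu hune
    obtain ⟨z, hz, rfl⟩ := hu
    refine hz ?_
    intro hzx
    rw [Set.mem_singleton_iff] at hzx
    subst hzx
    exact hune rfl

variable {f : ℂ → ℂ}

lemma eventually_comp_analytic (hmero : MeromorphicOn f Set.univ) (x : ℂ) {m : ℕ}
    (hm : 0 < m) : ∀ᶠ z in 𝓝[≠] x, AnalyticAt ℂ f (z ^ m) :=
  (tendsto_pow_punctured hm x).eventually ((hmero (x ^ m) trivial).eventually_analyticAt)

section FE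

variable {k d : ℕ} {a : ℕ → Polynomial ℂ}

/-- The "singular" set: points where some `f (z ^ k ^ j)` fails to be analytic. -/
def Sing (f : ℂ → ℂ) (k d : ℕ) : Set ℂ :=
  {z : ℂ | ∃ j ∈ Finset.range (d + 1), ¬ AnalyticAt ℂ f (z ^ k ^ j)}

lemma eventually_notin_sing (hmero : MeromorphicOn f Set.univ) (hk : 2 ≤ k) (x : ℂ) :
    ∀ᶠ z in 𝓝[≠] x, z ∉ Sing f k d := by
  have h1 : ∀ᶠ z in 𝓝[≠] x, ∀ j ∈ Finset.range (d + 1), AnalyticAt ℂ f (z ^ k ^ j) :=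
    (eventually_all_finite (Finset.range (d + 1)).finite_toSet).2
      fun j _ => eventually_comp_analytic hmero x (pow_pos (by omega) j)
  filter_upwards [h1] with z hz hmem
  obtain ⟨j, hj, hnot⟩ := hmem
  exact hnot (hz j hj)

lemma sing_countable (hmero : MeromorphicOn f Set.univ) (hk : 2 ≤ k) :
    (Sing f k d).Countable := by
  have : Sing f k d ⊆ ⋃ n : ℕ, Sing f k d ∩ closedBall 0 n := by
    intro z hz
    obtain ⟨n, hn⟩ := exists_nat_ge ‖z‖
    exact Set.mem_iUnion.2 ⟨n, hz, by simpa [Metric.mem_closedBall] using hn⟩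
  refine Set.Countable.mono this ?_
  exact Set.countable_iUnion fun n =>
    (finite_inter_compact (eventually_notin_sing hmero hk) (isCompact_closedBall 0 n)).countable

/-- The functional equation extends to the complement of the singular set. -/
lemma fe_global (hk : 2 ≤ k) (hf0 : AnalyticAt ℂ f 0) (hmero : MeromorphicOn f Set.univ)
    (heq : ∃ r : ℝ, 0 < r ∧ ∀ z ∈ ball (0 : ℂ) r,
      ∑ j ∈ Finset.range (d + 1), (a j).eval z * f (z ^ k ^ j) = 0)
    {z : ℂ} (hz : z ∉ Sing f k d) :
    ∑ j ∈ Finset.range (d + 1), (a j).eval z * f (z ^ k ^ j) = 0 := by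
  obtain ⟨r, hr, hfe⟩ := heq
  set g : ℂ → ℂ := fun z => ∑ j ∈ Finset.range (d + 1), (a j).eval z * f (z ^ k ^ j) with hg
  have hgan : AnalyticOnNhd ℂ g (Sing f k d)ᶜ := by
    intro w hw
    refine Finset.analyticAt_fun_sum _ fun j hj => ?_
    have hfa : AnalyticAt ℂ f (w ^ k ^ j) := by
      by_contra hnot
      exact hw ⟨j, hj, hnot⟩
    have h1 : AnalyticAt ℂ (fun x : ℂ => eval x (a j)) w :=
      (AnalyticOnNhd.eval_polynomial (a j)) w (Set.mem_univ w)
    have h2 : AnalyticAt ℂ (fun x : ℂ => f (x ^ k ^ j)) w := by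
      have hpow : AnalyticAt ℂ (fun x : ℂ => x ^ k ^ j) w :=
        (analyticAt_id (𝕜 := ℂ) (z := w)).pow _
      have h3 : AnalyticAt ℂ (f ∘ fun x : ℂ => x ^ k ^ j) w :=
        AnalyticAt.comp (g := f) (f := fun x : ℂ => x ^ k ^ j) hfa hpow
      exact h3
    exact h1.mul h2
  have hpre : IsPreconnected ((Sing f k d)ᶜ : Set ℂ) := by
    have h1 : (1 : Cardinal) < Module.rank ℝ ℂ := by
      rw [Complex.rank_real_complex]; norm_num
    exact (((sing_countable hmero hk).isPathConnected_compl_of_one_lt_rank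
      h1).isConnected).isPreconnected
  have h0 : (0 : ℂ) ∈ (Sing f k d)ᶜ := by
    intro h0
    obtain ⟨j, hj, hnot⟩ := h0
    rw [zero_pow (by positivity : k ^ j ≠ 0)] at hnot
    exact hnot hf0
  have hev : g =ᶠ[𝓝 (0 : ℂ)] 0 := by
    filter_upwards [ball_mem_nhds (0 : ℂ) hr] with w hw
    exact hfe w hw
  exact hgan.eqOn_zero_of_preconnected_of_eventuallyEq_zero hpre h0 hev hz

/-- The descent lemma: if `f` is bounded near all `z₀ ^ k ^ j` for `j < d` and the leading
coefficient does not vanish at `z₀`, then `f` is bounded near `z₀ ^ k ^ d`. -/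
lemma descent (hk : 2 ≤ k) (hf0 : AnalyticAt ℂ f 0) (hmero : MeromorphicOn f Set.univ)
    (heq : ∃ r : ℝ, 0 < r ∧ ∀ z ∈ ball (0 : ℂ) r,
      ∑ j ∈ Finset.range (d + 1), (a j).eval z * f (z ^ k ^ j) = 0)
    {z₀ : ℂ} (had : (a d).eval z₀ ≠ 0)
    (hbdd : ∀ j, j < d → Bdd f (z₀ ^ k ^ j)) :
    Bdd f (z₀ ^ k ^ d) := by
  have hkpos : ∀ j : ℕ, 0 < k ^ j := fun j => pow_pos (by omega) j
  have hcb : ∀ j, ∃ B : ℝ, j < d → (∀ᶠ z in 𝓝[≠] z₀, ‖f (z ^ k ^ j)‖ ≤ B) := by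
    intro j
    by_cases hj : j < d
    · obtain ⟨B, hB⟩ := hbdd j hj
      exact ⟨B, fun _ => (tendsto_pow_punctured (hkpos j) z₀).eventually hB⟩
    · exact ⟨0, fun h => absurd h hj⟩
  choose B hB using hcb
  set c : ℝ := ‖(a d).eval z₀‖ with hcdef
  have hc : 0 < c := norm_pos_iff.2 had
  set M : ℝ := ∑ j ∈ Finset.range d, (‖(a j).eval z₀‖ + 1) * max (B j) 0 with hM
  -- eventual facts
  have h1 : ∀ᶠ z in 𝓝[≠] z₀, ∀ j ∈ Finset.range d, ‖f (z ^ k ^ j)‖ ≤ B j :=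
    (eventually_all_finite (Finset.range d).finite_toSet).2
      fun j hj => hB j (Finset.mem_range.1 hj)
  have h2 : ∀ᶠ z in 𝓝[≠] z₀, z ∉ Sing f k (d := d) := eventually_notin_sing hmero hk z₀
  have h3 : ∀ᶠ z in 𝓝[≠] z₀, c / 2 ≤ ‖(a d).eval z‖ := by
    have ht : Tendsto (fun z : ℂ => ‖(a d).eval z‖) (𝓝 z₀) (𝓝 c) :=
      ((a d).continuous.norm.tendsto z₀)
    exact (ht.eventually_const_le (by linarith : c / 2 < c)).filter_mono nhdsWithin_le_nhds
  have h4 : ∀ᶠ z in 𝓝[≠] z₀, ∀ j ∈ Finset.range d, ‖(a j).eval z‖ ≤ ‖(a j).eval z₀‖ + 1 := by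
    refine (eventually_all_finite (Finset.range d).finite_toSet).2 fun j hj => ?_
    have ht : Tendsto (fun z : ℂ => ‖(a j).eval z‖) (𝓝 z₀) (𝓝 ‖(a j).eval z₀‖) :=
      ((a j).continuous.norm.tendsto z₀)
    exact (ht.eventually_le_const (by linarith : ‖(a j).eval z₀‖ < ‖(a j).eval z₀‖ + 1))
      |>.filter_mono nhdsWithin_le_nhds
  have key : ∀ᶠ z in 𝓝[≠] z₀, ‖f (z ^ k ^ d)‖ ≤ 2 * M / c := by
    filter_upwards [h1, h2, h3, h4] with z hz1 hz2 hz3 hz4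
    have hfe := fe_global hk hf0 hmero heq hz2
    rw [Finset.sum_range_succ] at hfe
    have hfe2 : (a d).eval z * f (z ^ k ^ d) = -∑ j ∈ Finset.range d, (a j).eval z * f (z ^ k ^ j) := by
      linear_combination hfe
    have hnorm : ‖(a d).eval z‖ * ‖f (z ^ k ^ d)‖ ≤ M := by
      rw [← norm_mul, hfe2, norm_neg]
      refine (norm_sum_le _ _).trans ?_
      rw [hM]
      refine Finset.sum_le_sum fun j hj => ?_
      rw [norm_mul]
      have hB0 : ‖f (z ^ k ^ j)‖ ≤ max (B j) 0 := le_max_of_le_left (hz1 j hj)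
      have ha0 : ‖(a j).eval z‖ ≤ ‖(a j).eval z₀‖ + 1 := hz4 j hj
      exact mul_le_mul ha0 hB0 (norm_nonneg _) (by positivity)
    have hM0 : 0 ≤ M := by
      rw [hM]
      refine Finset.sum_nonneg fun j hj => ?_
      positivity
    have h5 : c / 2 * ‖f (z ^ k ^ d)‖ ≤ M :=
      le_trans (mul_le_mul_of_nonneg_right hz3 (norm_nonneg _)) hnorm
    rw [div_mul_eq_mul_div, div_le_iff₀ (by norm_num : (0:ℝ) < 2)] at h5
    rw [le_div_iff₀ hc]
    linarith
  exact bdd_of_comp_pow (hkpos d) key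

end FE

lemma card_nthRoots_toFinset {n : ℕ} (hn : n ≠ 0) {w : ℂ} (hw : w ≠ 0) :
    (nthRoots n w).toFinset.card = n := by
  have hζ := Complex.isPrimitiveRoot_exp n hn
  have hnd := hζ.nthRoots_nodup (a := w) hw
  rw [Multiset.toFinset_card_of_nodup hnd, hζ.card_nthRoots w, if_pos]
  exact IsAlgClosed.exists_pow_nat_eq w (Nat.pos_of_ne_zero hn)

lemma card_nthRoots_toFinset_le (n : ℕ) (w : ℂ) :
    (nthRoots n w).toFinset.card ≤ n :=
  le_trans (Multiset.toFinset_card_le _) (card_nthRoots n w)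

lemma geom_sum_succ_le {k : ℕ} (hk : 2 ≤ k) (d : ℕ) :
    (∑ j ∈ Finset.range d, k ^ j) + 1 ≤ k ^ d := by
  induction d with
  | zero => simp
  | succ d ih =>
    rw [Finset.sum_range_succ, pow_succ]
    have h2 : 2 * k ^ d ≤ k * k ^ d := Nat.mul_le_mul_right _ hk
    have h3 : k ^ d * k = k * k ^ d := Nat.mul_comm _ _
    omega

/-- The key counting inequality between pole counts on consecutive "levels". -/
lemma level_ineq {P : Set ℂ} {k d : ℕ} (hk : 2 ≤ k) {C τ : ℝ}
    (hC : 1 ≤ C) (hτ : C ≤ τ)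
    (hdesc : ∀ w ∈ P, ∀ z : ℂ, z ^ k ^ d = w → C ≤ ‖z‖ → ∃ j, j < d ∧ z ^ k ^ j ∈ P)
    (hfin : ∀ i : ℕ, (P ∩ sphere (0 : ℂ) (τ ^ k ^ i)).Finite)
    (i : ℕ) (hi : d ≤ i) :
    k ^ d * (hfin i).toFinset.card ≤
      ∑ j ∈ Finset.range d, k ^ j * (hfin (i - d + j)).toFinset.card := by
  classical
  have hk0 : (0:ℕ) < k := by omega
  have hkj : ∀ j : ℕ, (0:ℕ) < k ^ j := fun j => pow_pos hk0 j
  have hτ1 : (1:ℝ) ≤ τ := le_trans hC hτ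
  set L : Finset ℂ := (hfin i).toFinset with hL
  set R : Finset ℂ := L.biUnion (fun p => (nthRoots (k ^ d) p).toFinset) with hR
  -- each pole on level i is nonzero
  have hmemL : ∀ p ∈ L, p ∈ P ∧ ‖p‖ = τ ^ k ^ i := by
    intro p hp
    rw [hL, Set.Finite.mem_toFinset] at hp
    exact ⟨hp.1, mem_sphere_zero_iff_norm.1 hp.2⟩
  have hpne : ∀ p ∈ L, p ≠ 0 := by
    intro p hp h0
    have := (hmemL p hp).2
    rw [h0, norm_zero] at this
    have : (0:ℝ) < τ ^ k ^ i := pow_pos (by linarith) _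
    simp_all
  -- card R = k ^ d * card L
  have hcardR : R.card = k ^ d * L.card := by
    rw [hR, Finset.card_biUnion]
    · rw [Finset.sum_congr rfl (fun p hp => card_nthRoots_toFinset (hkj d).ne' (hpne p hp))]
      simp [mul_comm]
    · intro p hp q hq hpq
      simp only [Finset.disjoint_left]
      intro z hz1 hz2
      rw [Multiset.mem_toFinset, mem_nthRoots (hkj d)] at hz1 hz2
      exact hpq (hz1 ▸ hz2 ▸ rfl)
  -- covering
  have hcover : R ⊆ (Finset.range d).biUnion (fun j =>
      (hfin (i - d + j)).toFinset.biUnion (fun q => (nthRoots (k ^ j) q).toFinset)) := by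
    intro z hz
    rw [hR, Finset.mem_biUnion] at hz
    obtain ⟨p, hp, hzp⟩ := hz
    rw [Multiset.mem_toFinset, mem_nthRoots (hkj d)] at hzp
    obtain ⟨hpP, hpnorm⟩ := hmemL p hp
    -- norm of z
    have hznorm : ‖z‖ = τ ^ k ^ (i - d) := by
      have h1 : ‖z‖ ^ k ^ d = (τ ^ k ^ (i - d)) ^ k ^ d := by
        rw [← norm_pow, hzp, hpnorm, ← pow_mul, ← pow_add, Nat.sub_add_cancel hi]
      exact (pow_left_strictMonoOn₀ (hkj d).ne').injOn (norm_nonneg z)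
        (Set.mem_setOf_eq ▸ (by positivity : (0:ℝ) ≤ τ ^ k ^ (i - d))) h1
    have hCz : C ≤ ‖z‖ := by
      rw [hznorm]
      exact le_trans hτ (le_self_pow₀ hτ1 (hkj (i-d)).ne')
    obtain ⟨j, hjd, hjP⟩ := hdesc p hpP z hzp hCz
    rw [Finset.mem_biUnion]
    refine ⟨j, Finset.mem_range.2 hjd, ?_⟩
    rw [Finset.mem_biUnion]
    refine ⟨z ^ k ^ j, ?_, ?_⟩
    · rw [Set.Finite.mem_toFinset]
      refine ⟨hjP, ?_⟩
      rw [mem_sphere_zero_iff_norm, norm_pow, hznorm, ← pow_mul, ← pow_add]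
    · rw [Multiset.mem_toFinset, mem_nthRoots (hkj j)]
  calc k ^ d * (hfin i).toFinset.card = R.card := hcardR.symm
    _ ≤ ((Finset.range d).biUnion (fun j =>
      (hfin (i - d + j)).toFinset.biUnion (fun q => (nthRoots (k ^ j) q).toFinset))).card :=
        Finset.card_le_card hcover
    _ ≤ ∑ j ∈ Finset.range d, ((hfin (i - d + j)).toFinset.biUnion
          (fun q => (nthRoots (k ^ j) q).toFinset)).card := Finset.card_biUnion_le
    _ ≤ ∑ j ∈ Finset.range d, k ^ j * (hfin (i - d + j)).toFinset.card := by
      refine Finset.sum_le_sum fun j hj => ?_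
      refine le_trans Finset.card_biUnion_le ?_
      rw [mul_comm]
      refine le_trans (Finset.sum_le_sum fun q hq => card_nthRoots_toFinset_le (k ^ j) q) ?_
      simp [Finset.sum_const, mul_comm]

lemma level_step {P : Set ℂ} {k d : ℕ} (hk : 2 ≤ k) (hd : 0 < d) {C τ : ℝ}
    (hC : 1 ≤ C) (hτ : C ≤ τ)
    (hdesc : ∀ w ∈ P, ∀ z : ℂ, z ^ k ^ d = w → C ≤ ‖z‖ → ∃ j, j < d ∧ z ^ k ^ j ∈ P)
    (hfin : ∀ i : ℕ, (P ∩ sphere (0 : ℂ) (τ ^ k ^ i)).Finite)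
    (i : ℕ) (hi : d ≤ i) (hc : 1 ≤ (hfin i).toFinset.card) :
    ∃ j, 0 < j ∧ j ≤ d ∧ (hfin i).toFinset.card < (hfin (i - j)).toFinset.card := by
  by_contra hcon
  push_neg at hcon
  set c : ℕ → ℕ := fun i => (hfin i).toFinset.card with hcdef
  have hci : 1 ≤ c i := hc
  have hmono : ∀ j ∈ Finset.range d, k ^ j * c (i - d + j) ≤ k ^ j * c i := by
    intro j hj
    rw [Finset.mem_range] at hj
    have h1 : i - d + j = i - (d - j) := by omega
    have h2 : c (i - (d - j)) ≤ c i := hcon (d - j) (by omega) (by omega)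
    rw [h1]
    exact Nat.mul_le_mul_left _ h2
  have h3 : k ^ d * c i ≤ (∑ j ∈ Finset.range d, k ^ j) * c i := by
    calc k ^ d * c i ≤ ∑ j ∈ Finset.range d, k ^ j * c (i - d + j) :=
          level_ineq hk hC hτ hdesc hfin i hi
      _ ≤ ∑ j ∈ Finset.range d, k ^ j * c i := Finset.sum_le_sum hmono
      _ = (∑ j ∈ Finset.range d, k ^ j) * c i := (Finset.sum_mul _ _ _).symm
  have h4 : ((∑ j ∈ Finset.range d, k ^ j) + 1) * c i ≤ k ^ d * c i :=
    Nat.mul_le_mul_right _ (geom_sum_succ_le hk d)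
  have h5 : ((∑ j ∈ Finset.range d, k ^ j) + 1) * c i
      = (∑ j ∈ Finset.range d, k ^ j) * c i + c i := by ring
  omega

lemma chain {c : ℕ → ℕ} {d : ℕ} (hd : 0 < d)
    (hstep : ∀ i, d ≤ i → 1 ≤ c i → ∃ j, 0 < j ∧ j ≤ d ∧ c i < c (i - j)) :
    ∀ i, 1 ≤ c i → ∃ m, m < d ∧ d * c i + i ≤ d * c m + m := by
  intro i
  induction i using Nat.strong_induction_on with
  | _ i ih =>
    intro hci
    by_cases hid : i < d
    · exact ⟨i, hid, le_rfl⟩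
    · push_neg at hid
      obtain ⟨j, hj0, hjd, hlt⟩ := hstep i hid hci
      have hij : i - j < i := by omega
      obtain ⟨m, hm, hle⟩ := ih (i - j) hij (by omega)
      refine ⟨m, hm, le_trans ?_ hle⟩
      have h1 : c i + 1 ≤ c (i - j) := hlt
      have h2 : d * (c i + 1) ≤ d * c (i - j) := Nat.mul_le_mul_left _ h1
      have h3 : d * (c i + 1) = d * c i + d := by ring
      omega

end KMahlerAux

open KMahlerAux

/-- A `k`-Mahler function which is meromorphic on all of ℂ has only finitely many
singularities (poles). Here `f : ℂ → ℂ` is analytic at `0`, satisfies the Mahler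
functional equation `Σ_{j=0}^d a_j(z) f(z^{k^j}) = 0` on a neighbourhood of `0`,
and is meromorphic on all of ℂ; a pole is a point where `‖f‖` blows up. -/
theorem kMahler_meromorphic_finitely_many_poles
    (k : ℕ) (hk : 2 ≤ k) (d : ℕ) (a : ℕ → Polynomial ℂ) (ha : a 0 * a d ≠ 0)
    (f : ℂ → ℂ) (hf0 : AnalyticAt ℂ f 0)
    (heq : ∃ r : ℝ, 0 < r ∧ ∀ z ∈ ball (0 : ℂ) r,
      ∑ j ∈ Finset.range (d + 1), (a j).eval z * f (z ^ k ^ j) = 0)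
    (hmero : MeromorphicOn f Set.univ) :
    {x : ℂ | Tendsto (fun z => ‖f z‖) (nhdsWithin x {x}ᶜ) atTop}.Finite := by
  classical
  set P : Set ℂ := {x : ℂ | ¬ Bdd f x} with hPdef
  have hsub : {x : ℂ | Tendsto (fun z => ‖f z‖) (nhdsWithin x {x}ᶜ) atTop} ⊆ P :=
    fun x hx => not_bdd_of_tendsto hx
  refine Set.Finite.subset ?_ hsub
  have hPloc : ∀ x : ℂ, ∀ᶠ z in 𝓝[≠] x, z ∉ P := by
    intro x
    filter_upwards [(hmero x trivial).eventually_analyticAt] with z hz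
    exact fun hzP => hzP (bdd_of_analyticAt hz)
  -- choice of the constant C
  have had0 : a d ≠ 0 := fun h => ha (by rw [h, mul_zero])
  have hroots : {z : ℂ | (a d).eval z = 0}.Finite := by
    have h1 := Polynomial.finite_setOf_isRoot had0
    simpa [Polynomial.IsRoot] using h1
  obtain ⟨r₀, hr₀⟩ := hroots.isBounded.subset_closedBall 0
  set C : ℝ := max 2 (r₀ + 1) with hCdef
  have hC2 : (2:ℝ) ≤ C := le_max_left _ _
  have hC1 : (1:ℝ) ≤ C := by linarith
  have hCroot : ∀ z : ℂ, C ≤ ‖z‖ → (a d).eval z ≠ 0 := by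
    intro z hz h0
    have h1 : z ∈ closedBall (0:ℂ) r₀ := hr₀ h0
    rw [mem_closedBall, dist_zero_right] at h1
    have h2 : r₀ + 1 ≤ C := le_max_right _ _
    linarith
  -- the descent property of the pole set
  have hdesc : ∀ w ∈ P, ∀ z : ℂ, z ^ k ^ d = w → C ≤ ‖z‖ → ∃ j, j < d ∧ z ^ k ^ j ∈ P := by
    intro w hw z hzw hCz
    by_contra hcon
    push_neg at hcon
    have hbdd : ∀ j, j < d → Bdd f (z ^ k ^ j) := by
      intro j hj
      have h1 := hcon j hj
      rw [hPdef, Set.mem_setOf_eq, not_not] at h1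
      exact h1
    have h2 := descent hk hf0 hmero heq (hCroot z hCz) hbdd
    rw [hzw] at h2
    exact hw h2
  rcases Nat.eq_zero_or_pos d with hd0 | hd
  · -- degenerate case d = 0 : no poles of norm ≥ C at all
    have hPsub : P ⊆ closedBall (0:ℂ) C := by
      intro w hw
      rw [mem_closedBall, dist_zero_right]
      by_contra hbig
      push_neg at hbig
      obtain ⟨j, hj, -⟩ := hdesc w hw w (by rw [hd0, pow_zero, pow_one]) hbig.le
      omega
    exact (finite_inter_compact hPloc (isCompact_closedBall (0:ℂ) C)).subset
      (fun x hx => ⟨hx, hPsub hx⟩)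
  · set R₀ : ℝ := C ^ k ^ (2 * d) with hR₀
    have hfinball := finite_inter_compact hPloc (isCompact_closedBall (0:ℂ) R₀)
    set b₀ : ℕ := hfinball.toFinset.card with hb₀
    have hbound : ∀ w ∈ P, ‖w‖ ≤ C ^ k ^ (d * (b₀ + 1)) := by
      intro w hw
      by_contra hbig
      push_neg at hbig
      set Q : ℕ → Prop := fun N => C ^ k ^ (d * N) < ‖w‖ with hQ
      obtain ⟨N₀', hN₀'⟩ := exists_nat_ge ‖w‖
      set bnd : ℕ := max N₀' (b₀ + 1) with hbnd
      have hQle : ∀ N, Q N → N ≤ bnd := by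
        intro N hQN
        by_contra hNb
        push_neg at hNb
        have h1 : (N:ℝ) < 2 ^ N := by exact_mod_cast Nat.lt_two_pow_self (n := N)
        have h2 : (2:ℝ) ^ N ≤ C ^ N := by gcongr <;> norm_num [hC2]
        have h3 : C ^ N ≤ C ^ k ^ (d * N) := by
          refine pow_le_pow_right₀ hC1 ?_
          calc N ≤ d * N := Nat.le_mul_of_pos_left N hd
            _ ≤ k ^ (d * N) := (Nat.lt_pow_self (n := d * N) (by omega : 1 < k)).le
        have h4 : (N₀' : ℝ) ≤ (N : ℝ) := by
          exact_mod_cast le_trans (le_max_left _ _) hNb.le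
        have hQN' : C ^ k ^ (d * N) < ‖w‖ := hQN
        linarith
      have hQb1 : Q (b₀ + 1) := hbig
      set N : ℕ := Nat.findGreatest Q bnd with hN
      have hQN : Q N := Nat.findGreatest_spec (le_max_right _ _) hQb1
      have hNge : b₀ + 1 ≤ N := Nat.le_findGreatest (le_max_right _ _) hQb1
      have hQN1 : ¬ Q (N + 1) := by
        intro hQ1
        have h1 := hQle _ hQ1
        exact absurd (Nat.findGreatest_is_greatest (by omega) h1) (not_not.2 hQ1)
      -- the base scale τ
      have hw0 : (0:ℝ) < ‖w‖ := lt_trans (by positivity) hbig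
      set K : ℕ := k ^ (d * N) with hK
      have hK0 : K ≠ 0 := by
        have : 0 < k ^ (d * N) := pow_pos (by omega) _
        omega
      set τ : ℝ := ‖w‖ ^ ((K : ℝ))⁻¹ with hτdef
      have hτpow : τ ^ K = ‖w‖ := Real.rpow_inv_natCast_pow (norm_nonneg w) hK0
      have hCτ : C ≤ τ := by
        have h1 : (C ^ K) ^ ((K:ℝ))⁻¹ ≤ ‖w‖ ^ ((K:ℝ))⁻¹ :=
          Real.rpow_le_rpow (by positivity) hQN.le (by positivity)
        rwa [Real.pow_rpow_inv_natCast (by linarith) hK0] at h1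
      have hτ0 : (0:ℝ) ≤ τ := by linarith
      have hτC : τ ≤ C ^ k ^ d := by
        have hexp : (C ^ k ^ d) ^ K = C ^ k ^ (d * (N + 1)) := by
          rw [← pow_mul, ← pow_add]
          congr 1
          ring
        have h2 : ‖w‖ ≤ (C ^ k ^ d) ^ K := by
          rw [hexp]
          exact not_lt.1 hQN1
        calc τ ≤ ((C ^ k ^ d) ^ K) ^ ((K:ℝ))⁻¹ :=
              Real.rpow_le_rpow (norm_nonneg w) h2 (by positivity)
          _ = C ^ k ^ d := Real.pow_rpow_inv_natCast (by positivity) hK0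
      -- level sets
      have hfin : ∀ i : ℕ, (P ∩ sphere (0:ℂ) (τ ^ k ^ i)).Finite :=
        fun i => finite_inter_compact hPloc (isCompact_sphere _ _)
      have hc1 : 1 ≤ (hfin (d * N)).toFinset.card := by
        refine Finset.card_pos.2 ⟨w, ?_⟩
        rw [Set.Finite.mem_toFinset]
        exact ⟨hw, by rw [mem_sphere_zero_iff_norm, ← hK, hτpow]⟩
      obtain ⟨m, hmd, hchain⟩ := chain hd
        (fun i hi hc => level_step hk hd hC1 hCτ hdesc hfin i hi hc) (d * N) hc1
      have hcm : N + 1 ≤ (hfin m).toFinset.card := by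
        by_contra hle
        push_neg at hle
        have h1 : d * (hfin m).toFinset.card ≤ d * N := Nat.mul_le_mul_left _ (by omega)
        have h2 : d * 1 ≤ d * (hfin (d * N)).toFinset.card := Nat.mul_le_mul_left _ hc1
        omega
      have hsub2 : (hfin m).toFinset ⊆ hfinball.toFinset := by
        intro z hz
        rw [Set.Finite.mem_toFinset] at hz ⊢
        refine ⟨hz.1, ?_⟩
        rw [mem_closedBall, dist_zero_right]
        have hznorm : ‖z‖ = τ ^ k ^ m := mem_sphere_zero_iff_norm.1 hz.2
        rw [hznorm, hR₀]
        calc τ ^ k ^ m ≤ (C ^ k ^ d) ^ k ^ m := by gcongr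
          _ = C ^ (k ^ d * k ^ m) := (pow_mul _ _ _).symm
          _ = C ^ k ^ (d + m) := by rw [pow_add]
          _ ≤ C ^ k ^ (2 * d) := by
            refine pow_le_pow_right₀ hC1 (pow_le_pow_right₀ (by omega : 1 ≤ k) ?_)
            omega
      have hfinal : N + 1 ≤ b₀ := le_trans hcm (Finset.card_le_card hsub2)
      omega
    have hPsub : P ⊆ closedBall (0:ℂ) (C ^ k ^ (d * (b₀ + 1))) := fun w hw => by
      rw [mem_closedBall, dist_zero_right]; exact hbound w hw
    exact (finite_inter_compact hPloc (isCompact_closedBall _ _)).subset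
      (fun x hx => ⟨hx, hPsub hx⟩)
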